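/- Under the stated assumptions, liminf_{N→∞} (1/N)·∑_{I ∈ 𝓘^N} binom(|I|+1, 2) ≥ 1/2, where binom(k,2) = k(k−1)/2. -/

import Mathlib

open Finset Filter

open scoped Classical in
/-- The collection `𝓘^N` of maximal subintervals of `{1,…,N}` on which the gaps `g n` are at
most `1/2`, encoded as the set of pairs `(p, q)` of endpoints, `1 ≤ p ≤ q ≤ N`. -/
noncomputable def maximalIntervals (g : ℕ → ℝ) (N : ℕ) : Finset (ℕ × ℕ) :=
  (Finset.Icc 1 N ×ˢ Finset.Icc 1 N).filter fun pq =>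
    pq.1 ≤ pq.2 ∧ (∀ n ∈ Finset.Icc pq.1 pq.2, g n ≤ 1 / 2) ∧
      (pq.1 = 1 ∨ 1 / 2 < g (pq.1 - 1)) ∧ (pq.2 = N ∨ 1 / 2 < g (pq.2 + 1))

/-- counting pairs `a < b` in `range m`. -/
lemma count_pairs_range (m : ℕ) :
    ((Finset.range m ×ˢ Finset.range m).filter fun ij => ij.1 < ij.2).card = m.choose 2 := by
  have h : ((Finset.range m ×ˢ Finset.range m).filter fun ij => ij.1 < ij.2)
      = (Finset.range m).biUnion (fun b => (Finset.range b).map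
          ⟨fun a => (a, b), fun a a' h => by simpa using congrArg Prod.fst h⟩) := by
    ext ⟨a, b⟩
    simp only [Finset.mem_filter, Finset.mem_product, Finset.mem_range, Finset.mem_biUnion,
      Finset.mem_map, Function.Embedding.coeFn_mk, Prod.mk.injEq]
    constructor
    · rintro ⟨⟨ha, hb⟩, hab⟩
      exact ⟨b, hb, a, hab, rfl⟩
    · rintro ⟨b', hb', a', ha', rfl, rfl⟩
      exact ⟨⟨ha'.trans hb', hb'⟩, ha'⟩
  rw [h, Finset.card_biUnion]
  · simp only [Finset.card_map, Finset.card_range]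
    rw [Finset.sum_range_id, Nat.choose_two_right]
  · intro x _ y _ hxy
    simp only [Finset.disjoint_left, Finset.mem_map, Function.Embedding.coeFn_mk]
    rintro z ⟨a, _, rfl⟩ ⟨a', _, h⟩
    exact hxy ((Prod.mk.injEq _ _ _ _).mp h).2.symm

lemma count_pairs_Icc (p q : ℕ) (hpq : p ≤ q) :
    ((Finset.Icc p (q + 1) ×ˢ Finset.Icc p (q + 1)).filter fun ij => ij.1 < ij.2).card
      ≤ (q - p + 1 + 1).choose 2 := by
  rw [← count_pairs_range (q - p + 1 + 1)]
  apply Finset.card_le_card_of_injOn (fun ij => (ij.1 - p, ij.2 - p))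
  · rintro ⟨a, b⟩ h
    simp only [Finset.mem_coe, Finset.mem_filter, Finset.mem_product, Finset.mem_Icc, Finset.mem_range] at h ⊢
    omega
  · rintro ⟨a, b⟩ ha ⟨c, d⟩ hc h
    simp only [Finset.mem_coe, Finset.mem_filter, Finset.mem_product, Finset.mem_Icc,
      Prod.mk.injEq] at ha hc h ⊢
    omega

/-- Every small-gap block extends to a maximal interval. -/
lemma exists_maximal (g : ℕ → ℝ) (N i j : ℕ) (hi : 1 ≤ i) (hij : i < j) (hjN : j ≤ N)
    (hg : ∀ n ∈ Finset.Icc i (j - 1), g n ≤ 1 / 2) :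
    ∃ pq ∈ maximalIntervals g N, pq.1 ≤ i ∧ j - 1 ≤ pq.2 := by
  haveI : DecidablePred (fun p : ℕ => ∀ n ∈ Finset.Icc p (j - 1), g n ≤ 1 / 2) :=
    fun _ => Finset.decidableDforallFinset
  set A := (Finset.Icc 1 i).filter (fun p => ∀ n ∈ Finset.Icc p (j - 1), g n ≤ 1 / 2) with hA
  have hiA : i ∈ A := by
    rw [hA, Finset.mem_filter, Finset.mem_Icc]
    exact ⟨⟨hi, le_refl i⟩, hg⟩
  have hAne : A.Nonempty := ⟨i, hiA⟩
  set p := A.min' hAne with hp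
  have hpA : p ∈ A := A.min'_mem hAne
  rw [hA, Finset.mem_filter, Finset.mem_Icc] at hpA
  obtain ⟨⟨hp1, hpi⟩, hpg⟩ := hpA
  have hleft : p = 1 ∨ 1 / 2 < g (p - 1) := by
    by_contra hcon
    push_neg at hcon
    obtain ⟨h1, h2⟩ := hcon
    have hmem : p - 1 ∈ A := by
      rw [hA, Finset.mem_filter, Finset.mem_Icc]
      refine ⟨⟨by omega, by omega⟩, fun n hn => ?_⟩
      rw [Finset.mem_Icc] at hn
      rcases eq_or_lt_of_le hn.1 with h | h
      · rw [← h]; exact h2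
      · exact hpg n (Finset.mem_Icc.mpr ⟨by omega, hn.2⟩)
    have := A.min'_le _ hmem
    omega
  haveI : DecidablePred (fun q : ℕ => ∀ n ∈ Finset.Icc p q, g n ≤ 1 / 2) :=
    fun _ => Finset.decidableDforallFinset
  set B := (Finset.Icc (j - 1) N).filter (fun q => ∀ n ∈ Finset.Icc p q, g n ≤ 1 / 2) with hB
  have hjB : j - 1 ∈ B := by
    rw [hB, Finset.mem_filter, Finset.mem_Icc]
    exact ⟨⟨le_refl _, by omega⟩, hpg⟩
  have hBne : B.Nonempty := ⟨j - 1, hjB⟩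
  set q := B.max' hBne with hq
  have hqB : q ∈ B := B.max'_mem hBne
  rw [hB, Finset.mem_filter, Finset.mem_Icc] at hqB
  obtain ⟨⟨hjq, hqN⟩, hqg⟩ := hqB
  have hright : q = N ∨ 1 / 2 < g (q + 1) := by
    by_contra hcon
    push_neg at hcon
    obtain ⟨h1, h2⟩ := hcon
    have hmem : q + 1 ∈ B := by
      rw [hB, Finset.mem_filter, Finset.mem_Icc]
      refine ⟨⟨by omega, by omega⟩, fun n hn => ?_⟩
      rw [Finset.mem_Icc] at hn
      rcases eq_or_lt_of_le hn.2 with h | h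
      · rw [h]; exact h2
      · exact hqg n (Finset.mem_Icc.mpr ⟨hn.1, by omega⟩)
    have := B.le_max' _ hmem
    omega
  refine ⟨(p, q), ?_, hpi, hjq⟩
  rw [maximalIntervals, Finset.mem_filter, Finset.mem_product, Finset.mem_Icc, Finset.mem_Icc]
  exact ⟨⟨⟨hp1, by omega⟩, ⟨by omega, hqN⟩⟩, by omega, hqg, hleft, hright⟩

open scoped Classical in
/-- Let `(λ_n)` be strictly increasing with average gap `1` and Poisson pair correlations,
let `ε = 10⁻⁹`, and suppose `g n := λ_{n+1} − λ_n ≤ 3/2 + ε` for all `n ≥ 1`. Then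
`liminf_{N→∞} (1/N)·∑_{I ∈ 𝓘^N} C(|I|+1, 2) ≥ 1/2`. -/
theorem stmt_9 (lam : ℕ → ℝ) (g : ℕ → ℝ) (hgdef : ∀ n, g n = lam (n + 1) - lam n)
    (hmono : ∀ n, 1 ≤ n → lam n < lam (n + 1))
    (havg : Tendsto (fun N : ℕ => (∑ n ∈ Finset.Icc 1 N, g n) / N) atTop (nhds 1))
    (hppc : ∀ I : Set ℝ, I.OrdConnected → Bornology.IsBounded I →
      Tendsto (fun N : ℕ =>
          (((Finset.Icc 1 N ×ˢ Finset.Icc 1 N).filter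
            (fun p => p.1 ≠ p.2 ∧ lam p.2 - lam p.1 ∈ I)).card : ℝ) / N)
        atTop (nhds (MeasureTheory.volume I).toReal))
    (ε : ℝ) (hε : ε = 1 / 10 ^ 9)
    (hgap : ∀ n, 1 ≤ n → g n ≤ 3 / 2 + ε) :
    Filter.liminf (fun N : ℕ =>
        (((∑ pq ∈ maximalIntervals g N, ((pq.2 - pq.1 + 1 + 1).choose 2 : ℝ)) / N : ℝ) : EReal))
      atTop ≥ ((1 / 2 : ℝ) : EReal) := by
  -- monotonicity facts
  have hlam_mono : ∀ i j, 1 ≤ i → i ≤ j → lam i ≤ lam j := by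
    intro i j hi hij
    induction j with
    | zero => omega
    | succ j ih =>
      rcases Nat.lt_succ_iff_lt_or_eq.mp (Nat.lt_succ_of_le hij) with h | h
      · exact le_trans (ih (by omega)) (hmono j (by omega)).le
      · rw [h]
  have hstrict : ∀ i j, 1 ≤ i → i < j → lam i < lam j := by
    intro i j hi hij
    exact lt_of_lt_of_le (hmono i hi) (hlam_mono (i + 1) j (by omega) hij)
  -- key counting inequality, instance-free form
  have key : ∀ (N : ℕ) (S : Finset (ℕ × ℕ)),
      (∀ x ∈ S, 1 ≤ x.1 ∧ x.1 ≤ N ∧ 1 ≤ x.2 ∧ x.2 ≤ N ∧ x.1 ≠ x.2 ∧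
        lam x.2 - lam x.1 ∈ Set.Ioc (0 : ℝ) (1 / 2)) →
      S.card ≤ ∑ pq ∈ maximalIntervals g N, (pq.2 - pq.1 + 1 + 1).choose 2 := by
    intro N S hS
    classical
    have hsub : S ⊆ (maximalIntervals g N).biUnion (fun pq =>
        (Finset.Icc pq.1 (pq.2 + 1) ×ˢ Finset.Icc pq.1 (pq.2 + 1)).filter
          fun ij => ij.1 < ij.2) := by
      rintro ⟨i, j⟩ hij
      obtain ⟨hi1, hiN, hj1, hjN, hne, hpos, hle⟩ := hS _ hij
      have hij' : i < j := by
        by_contra hcon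
        push_neg at hcon
        rcases eq_or_lt_of_le hcon with h | h
        · exact hne h.symm
        · have := hstrict j i hj1 h
          simp only at hpos
          linarith
      have hgsmall : ∀ n ∈ Finset.Icc i (j - 1), g n ≤ 1 / 2 := by
        intro n hn
        rw [Finset.mem_Icc] at hn
        have h1 : lam i ≤ lam n := hlam_mono i n hi1 hn.1
        have h2 : lam (n + 1) ≤ lam j := hlam_mono (n + 1) j (by omega) (by omega)
        rw [hgdef]
        simp only at hle
        linarith
      obtain ⟨pq, hpqmem, hp, hq⟩ := exists_maximal g N i j hi1 hij' hjN hgsmall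
      rw [Finset.mem_biUnion]
      refine ⟨pq, hpqmem, ?_⟩
      rw [Finset.mem_filter, Finset.mem_product, Finset.mem_Icc, Finset.mem_Icc]
      exact ⟨⟨⟨hp, by omega⟩, ⟨by omega, by omega⟩⟩, hij'⟩
    calc S.card ≤ _ := Finset.card_le_card hsub
      _ ≤ ∑ pq ∈ maximalIntervals g N,
            ((Finset.Icc pq.1 (pq.2 + 1) ×ˢ Finset.Icc pq.1 (pq.2 + 1)).filter
              fun ij => ij.1 < ij.2).card := Finset.card_biUnion_le
      _ ≤ ∑ pq ∈ maximalIntervals g N, (pq.2 - pq.1 + 1 + 1).choose 2 := by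
          apply Finset.sum_le_sum
          intro pq hpq
          rw [maximalIntervals, Finset.mem_filter] at hpq
          exact count_pairs_Icc pq.1 pq.2 hpq.2.1
  -- PPC for (0, 1/2]
  have hIoc := hppc (Set.Ioc 0 (1 / 2)) Set.ordConnected_Ioc (Metric.isBounded_Ioc 0 (1 / 2))
  have hvol : (MeasureTheory.volume (Set.Ioc (0 : ℝ) (1 / 2))).toReal = 1 / 2 := by
    rw [Real.volume_Ioc]
    norm_num
  rw [hvol] at hIoc
  -- pass to EReal liminf
  have h1 : Tendsto _ atTop (nhds ((1 / 2 : ℝ) : EReal)) := EReal.tendsto_coe.mpr hIoc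
  rw [ge_iff_le, ← h1.liminf_eq]
  apply Filter.liminf_le_liminf _ (by isBoundedDefault) (by isBoundedDefault)
  filter_upwards [eventually_ge_atTop 1] with N hN
  rw [EReal.coe_le_coe_iff]
  have hNpos : (0 : ℝ) < N := by exact_mod_cast hN
  rw [div_le_div_iff_of_pos_right hNpos]
  have hkey := key N ((Finset.Icc 1 N ×ˢ Finset.Icc 1 N).filter
      (fun p => p.1 ≠ p.2 ∧ lam p.2 - lam p.1 ∈ Set.Ioc (0 : ℝ) (1 / 2)))
      (by
        intro x hx
        rw [Finset.mem_filter, Finset.mem_product, Finset.mem_Icc, Finset.mem_Icc] at hx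
        exact ⟨hx.1.1.1, hx.1.1.2, hx.1.2.1, hx.1.2.2, hx.2.1, hx.2.2⟩)
  exact_mod_cast hkey
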